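/- Let G be a soluble group and w a multilinear commutator word such that every w-value in G has finite order. Then the verbal subgroup w(G) is locally finite. (Special case: if G is soluble and every commutator [x,y] has finite order, then the derived subgroup G' is locally finite.) -/

import Mathlib

/-- Formal commutator words in variables indexed by `ℕ`. -/
inductive CommWord : Type
  | var : ℕ → CommWord
  | comm : CommWord → CommWord → CommWord

namespace CommWord

open scoped commutatorElement

/-- The set of variables occurring in a commutator word. -/
def vars : CommWord → Finset ℕ
  | var n => {n}
  | comm u v => u.vars ∪ v.vars

/-- A commutator word is multilinear if all its variables are distinct. -/
def Multilinear : CommWord → Prop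
  | var _ => True
  | comm u v => Multilinear u ∧ Multilinear v ∧ Disjoint u.vars v.vars

/-- Evaluation of a commutator word in a group under an assignment of the variables. -/
def eval {G : Type*} [Group G] (f : ℕ → G) : CommWord → G
  | var n => f n
  | comm u v => ⁅eval f u, eval f v⁆

end CommWord

/-- The set of `w`-values in `G`. -/
def wValues (w : CommWord) (G : Type*) [Group G] : Set G :=
  {x | ∃ f : ℕ → G, CommWord.eval f w = x}

/-- The verbal subgroup `w(G)` generated by all `w`-values. -/
def verbal (w : CommWord) (G : Type*) [Group G] : Subgroup G :=
  Subgroup.closure (wValues w G)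

/-- `x` is a product of at most `N` `w`-values. -/
def IsProdOfWValues (w : CommWord) {G : Type*} [Group G] (N : ℕ) (x : G) : Prop :=
  ∃ l : List G, l.length ≤ N ∧ (∀ y ∈ l, y ∈ wValues w G) ∧ l.prod = x

open scoped commutatorElement

namespace CommWord

variable {G : Type*} [Group G]

lemma eval_congr : ∀ (w : CommWord) {f g : ℕ → G}, (∀ n ∈ w.vars, f n = g n) →
    eval f w = eval g w
  | var n, f, g, h => h n (Finset.mem_singleton_self n)
  | comm u v, f, g, h => by
    show ⁅eval f u, eval f v⁆ = ⁅eval g u, eval g v⁆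
    rw [eval_congr u (fun n hn => h n (Finset.mem_union_left _ hn)),
        eval_congr v (fun n hn => h n (Finset.mem_union_right _ hn))]

lemma eval_map {H : Type*} [Group H] (φ : G →* H) (f : ℕ → G) :
    ∀ w : CommWord, eval (fun n => φ (f n)) w = φ (eval f w)
  | var n => rfl
  | comm u v => by
    show ⁅eval _ u, eval _ v⁆ = φ ⁅eval f u, eval f v⁆
    rw [map_commutatorElement, eval_map φ f u, eval_map φ f v]

lemma eval_eq_one_of_slot {f : ℕ → G} : ∀ (w : CommWord) (n₀ : ℕ),
    n₀ ∈ w.vars → f n₀ = 1 → eval f w = 1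
  | var n, n₀, hn, h1 => by
    have h : n₀ = n := Finset.mem_singleton.mp hn
    rw [← h]; exact h1
  | comm u v, n₀, hn, h1 => by
    rcases Finset.mem_union.mp hn with h | h
    · show ⁅eval f u, eval f v⁆ = 1
      rw [eval_eq_one_of_slot u n₀ h h1]
      simp [commutatorElement_def]
    · show ⁅eval f u, eval f v⁆ = 1
      rw [eval_eq_one_of_slot v n₀ h h1]
      simp [commutatorElement_def]

lemma eval_conj (g : G) (f : ℕ → G) (w : CommWord) :
    eval (fun n => g * f n * g⁻¹) w = g * eval f w * g⁻¹ := by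
  have h := eval_map ((MulAut.conj g).toMonoidHom) f w
  simpa [MulAut.conj_apply] using h

end CommWord

section WValuesLemmas

variable {G : Type*} [Group G]

lemma wValues_conj_mem (w : CommWord) (g : G) {x : G} (hx : x ∈ wValues w G) :
    g * x * g⁻¹ ∈ wValues w G := by
  obtain ⟨f, rfl⟩ := hx
  exact ⟨fun n => g * f n * g⁻¹, CommWord.eval_conj g f w⟩

lemma wValues_inv_mem : ∀ {w : CommWord}, w.Multilinear →
    ∀ {x : G}, x ∈ wValues w G → x⁻¹ ∈ wValues w G := by
  intro w
  induction w with
  | var n =>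
    rintro - x ⟨f, rfl⟩
    exact ⟨fun m => (f m)⁻¹, rfl⟩
  | comm u v ihu ihv =>
    rintro ⟨hu, hv, hd⟩ x ⟨f, rfl⟩
    classical
    obtain ⟨f', hf'⟩ := ihu hu ⟨f, rfl⟩
    set a := CommWord.eval f u with ha
    set b := CommWord.eval f v with hb
    set h : ℕ → G := fun n => if n ∈ u.vars then f' n else f n with hh
    have h1 : CommWord.eval h u = a⁻¹ := by
      rw [CommWord.eval_congr u (f := h) (g := f') (fun n hn => if_pos hn)]
      exact hf'
    have h2 : CommWord.eval h v = b := by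
      refine CommWord.eval_congr v (fun n hn => ?_)
      exact if_neg (fun hc => Finset.disjoint_left.mp hd hc hn)
    have hmem : ⁅a⁻¹, b⁆ ∈ wValues (CommWord.comm u v) G := by
      refine ⟨h, ?_⟩
      show ⁅CommWord.eval h u, CommWord.eval h v⁆ = _
      rw [h1, h2]
    have hconj := wValues_conj_mem (CommWord.comm u v) a hmem
    have heq : a * ⁅a⁻¹, b⁆ * a⁻¹ = (⁅a, b⁆)⁻¹ := by
      simp [commutatorElement_def]; group
    rwa [heq] at hconj

lemma wValues_map_image {H : Type*} [Group H] (φ : G →* H) (w : CommWord) :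
    φ '' wValues w G ⊆ wValues w H := by
  rintro x ⟨y, ⟨f, rfl⟩, rfl⟩
  exact ⟨fun n => φ (f n), CommWord.eval_map φ f w⟩

lemma wValues_subset_map_of_surjective {H : Type*} [Group H] (φ : G →* H)
    (hφ : Function.Surjective φ) (w : CommWord) :
    wValues w H ⊆ φ '' wValues w G := by
  rintro x ⟨f, rfl⟩
  choose g hg using fun n => hφ (f n)
  refine ⟨CommWord.eval g w, ⟨g, rfl⟩, ?_⟩
  rw [← CommWord.eval_map]
  exact CommWord.eval_congr w (fun n _ => hg n)

end WValuesLemmas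

section GenericGroup

open Subgroup

variable {G : Type*} [Group G]

lemma commute_of_mem_closures {X Y : Set G} (h : ∀ x ∈ X, ∀ y ∈ Y, Commute x y) :
    ∀ p ∈ closure X, ∀ q ∈ closure Y, Commute p q := by
  have step : ∀ x ∈ X, ∀ q ∈ closure Y, Commute x q := by
    intro x hx q hq
    induction hq using closure_induction with
    | mem y hy => exact h x hx y hy
    | one => exact Commute.one_right x
    | mul a b _ _ ha hb => exact ha.mul_right hb
    | inv a _ ha => exact ha.inv_right
  intro p hp q hq
  induction hp using closure_induction with
  | mem x hx => exact step x hx q hq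
  | one => exact Commute.one_left q
  | mul a b _ _ ha hb => exact ha.mul_left hb
  | inv a _ ha => exact ha.inv_left

lemma isOfFinOrder_of_mem_closure_comm {X : Set G}
    (hX : ∀ x ∈ X, IsOfFinOrder x)
    (hc : ∀ p q : G, p ∈ closure X → q ∈ closure X → Commute p q) :
    ∀ x ∈ closure X, IsOfFinOrder x := by
  intro x hx
  induction hx using closure_induction with
  | mem y hy => exact hX y hy
  | one => exact IsOfFinOrder.one
  | mul a b ha hb iha ihb => exact (hc a b ha hb).isOfFinOrder_mul iha ihb
  | inv a ha iha => exact iha.inv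

lemma isOfFinOrder_subtype {H : Subgroup G} {x : ↥H} (h : IsOfFinOrder (x : G)) :
    IsOfFinOrder x := by
  obtain ⟨n, hn, h1⟩ := isOfFinOrder_iff_pow_eq_one.mp h
  refine isOfFinOrder_iff_pow_eq_one.mpr ⟨n, hn, ?_⟩
  apply Subtype.ext
  rw [Subgroup.coe_pow]
  simpa using h1

lemma commAux {Q : Type*} [Group Q] {P₀ p' Q₀ q' : Q}
    (h1 : Commute p' Q₀) (h2 : Commute p' q') (h3 : Commute q' P₀) :
    ⁅P₀ * p', Q₀ * q'⁆ = ⁅P₀, Q₀⁆ := by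
  have h4 : Commute p' (Q₀ * q') := h1.mul_right h2
  calc ⁅P₀ * p', Q₀ * q'⁆
      = P₀ * (p' * (Q₀ * q')) * p'⁻¹ * P₀⁻¹ * (Q₀ * q')⁻¹ := by
        rw [commutatorElement_def]; group
    _ = P₀ * ((Q₀ * q') * p') * p'⁻¹ * P₀⁻¹ * (Q₀ * q')⁻¹ := by rw [h4.eq]
    _ = P₀ * Q₀ * (q' * P₀⁻¹) * q'⁻¹ * Q₀⁻¹ := by group
    _ = P₀ * Q₀ * (P₀⁻¹ * q') * q'⁻¹ * Q₀⁻¹ := by rw [h3.inv_right.eq]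
    _ = ⁅P₀, Q₀⁆ := by rw [commutatorElement_def]; group

end GenericGroup
section FinitenessHelpers

open Subgroup
open scoped Pointwise
open scoped IsMulCommutative

lemma finite_closure_of_comm_torsion {C : Type*} [CommGroup C] (T : Finset C)
    (hT : ∀ x ∈ T, IsOfFinOrder x) : Finite ↥(closure (T : Set C)) := by
  classical
  induction T using Finset.induction_on with
  | empty =>
    rw [Finset.coe_empty, Subgroup.closure_empty]
    have : ((⊥ : Subgroup C) : Set C).Finite := by
      rw [Subgroup.coe_bot]; exact Set.finite_singleton 1
    exact this.to_subtype
  | @insert a T' ha ih =>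
    rw [Finset.coe_insert, Set.insert_eq, Subgroup.closure_union]
    have h1 : Finite ↥(closure ({a} : Set C)) := by
      rw [← Subgroup.zpowers_eq_closure]
      have := hT a (Finset.mem_insert_self a T')
      exact this.finite_zpowers
    have h2 : Finite ↥(closure (T' : Set C)) :=
      ih (fun x hx => hT x (Finset.mem_insert_of_mem hx))
    have key : ((closure ({a} : Set C) ⊔ closure (T' : Set C) : Subgroup C) : Set C)
        = (closure ({a} : Set C) : Set C) * (closure (T' : Set C) : Set C) :=
      Subgroup.mul_normal _ _
    have fin : ((closure ({a} : Set C) : Set C) * (closure (T' : Set C) : Set C)).Finite :=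
      Set.Finite.mul (Set.toFinite _) (Set.toFinite _)
    rw [← key] at fin
    exact fin.to_subtype

lemma finite_of_fg_torsion_comm {C : Type*} [CommGroup C] [hFG : Group.FG C]
    (hC : ∀ x : C, IsOfFinOrder x) : Finite C := by
  obtain ⟨T, hT⟩ := Group.fg_def.mp hFG
  have : Finite ↥(⊤ : Subgroup C) := hT ▸ finite_closure_of_comm_torsion T (fun x _ => hC x)
  exact Finite.of_equiv _ Subgroup.topEquiv.toEquiv

lemma finite_of_center_findex {K : Type*} [Group K] [Group.FG K]
    [hFI : (Subgroup.center K).FiniteIndex] (X : Set K) (hgen : closure X = ⊤)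
    (htor : ∀ x ∈ X, IsOfFinOrder x) : Finite K := by
  set φ := MonoidHom.transferCenterPow K with hφ
  have hrange : ∀ y ∈ (⊤ : Subgroup K).map φ, IsOfFinOrder y := by
    rw [← hgen, MonoidHom.map_closure]
    refine isOfFinOrder_of_mem_closure_comm ?_ ?_
    · rintro y ⟨x, hx, rfl⟩
      exact φ.isOfFinOrder (htor x hx)
    · intro p q _ _
      exact Commute.all p q
  have hcenter : ∀ z : Subgroup.center K, IsOfFinOrder z := by
    intro z
    have h1 : IsOfFinOrder (φ (z : K)) := hrange _ ⟨(z : K), Subgroup.mem_top _, rfl⟩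
    obtain ⟨m, hm, hpow⟩ := isOfFinOrder_iff_pow_eq_one.mp h1
    have hidx : (Subgroup.center K).index ≠ 0 := hFI.index_ne_zero
    refine isOfFinOrder_iff_pow_eq_one.mpr ⟨(Subgroup.center K).index * m, ?_, ?_⟩
    · exact Nat.mul_pos (Nat.pos_of_ne_zero hidx) hm
    · apply Subtype.ext
      rw [Subgroup.coe_pow]
      have h2 : ((φ (z : K) ^ m : Subgroup.center K) : K) = 1 := by rw [hpow]; rfl
      rw [Subgroup.coe_pow, MonoidHom.transferCenterPow_apply] at h2
      rw [pow_mul]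
      simpa using h2
  haveI : Group.FG ↥(Subgroup.center K) := Subgroup.fg_of_index_ne_zero _
  have hcfin : Finite ↥(Subgroup.center K) := finite_of_fg_torsion_comm hcenter
  have hqfin : Finite (K ⧸ Subgroup.center K) := inferInstance
  exact Finite.of_equiv _ (Subgroup.groupEquivQuotientProdSubgroup
    (s := Subgroup.center K)).symm

lemma finite_of_map_of_ker {G : Type*} [Group G] {G₂ : Type*} [Group G₂]
    (f : G →* G₂) (K : Subgroup G) (hfg : K.FG)
    (him : Finite ↥(K.map f))
    (hker : ∀ L : Subgroup G, L ≤ f.ker → L ≤ K → L.FG → Finite ↥L) : Finite ↥K := by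
  classical
  haveI : Group.FG ↥K := (Group.fg_iff_subgroup_fg K).mpr hfg
  set ψ := f.comp K.subtype with hψ
  have hrange : ψ.range = K.map f := by
    rw [hψ, MonoidHom.range_comp, Subgroup.range_subtype]
  haveI hfr : Finite ↥ψ.range := by rw [hrange]; exact him
  haveI : Finite (↥K ⧸ ψ.ker) :=
    Finite.of_equiv _ (QuotientGroup.quotientKerEquivRange ψ).symm.toEquiv
  haveI : ψ.ker.FiniteIndex := Subgroup.finiteIndex_of_finite_quotient
  haveI : Group.FG ↥ψ.ker := Subgroup.fg_of_index_ne_zero _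
  set L := ψ.ker.map K.subtype with hL
  have hL1 : L ≤ f.ker := by
    rintro x ⟨y, hy, rfl⟩
    exact hy
  have hL2 : L ≤ K := Subgroup.map_subtype_le _
  have hL3 : L.FG := by
    obtain ⟨T, hT⟩ := (Group.fg_iff_subgroup_fg ψ.ker).mp ‹_›
    exact ⟨T.image K.subtype, by rw [Finset.coe_image, ← MonoidHom.map_closure, hT]⟩
  have hLfin : Finite ↥L := hker L hL1 hL2 hL3
  haveI : Finite ↥ψ.ker := Finite.of_equiv _
    (Subgroup.equivMapOfInjective ψ.ker K.subtype (Subgroup.subtype_injective K)).symm.toEquiv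
  exact Finite.of_equiv _ (Subgroup.groupEquivQuotientProdSubgroup (s := ψ.ker)).symm

end FinitenessHelpers
section SlotSubgroup

open Subgroup

variable {G : Type*} [Group G] (A : Subgroup G)

/-- `w`-values some slot of which lies in `A`. -/
def slotSet (w : CommWord) : Set G :=
  {x | ∃ f : ℕ → G, (∃ n ∈ w.vars, f n ∈ A) ∧ CommWord.eval f w = x}

lemma slotSet_subset_wValues (w : CommWord) : slotSet A w ⊆ wValues w G := by
  rintro x ⟨f, -, hf⟩
  exact ⟨f, hf⟩

/-- The subgroup generated by `w`-values with a slot in `A`. -/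
def SGA (w : CommWord) : Subgroup G := closure (slotSet A w)

variable [hAn : A.Normal]

instance SGA_normal (w : CommWord) : (SGA A w).Normal := by
  constructor
  intro x hx g
  revert g
  induction hx using closure_induction with
  | mem y hy =>
    intro g
    apply Subgroup.subset_closure
    obtain ⟨f, ⟨n₀, hn₀, hA⟩, rfl⟩ := hy
    exact ⟨fun n => g * f n * g⁻¹, ⟨n₀, hn₀, hAn.conj_mem _ hA g⟩,
      CommWord.eval_conj g f w⟩
  | one => intro g; simpa using (SGA A w).one_mem
  | mul a b _ _ iha ihb =>
    intro g
    have h := mul_mem (iha g) (ihb g)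
    have : g * a * g⁻¹ * (g * b * g⁻¹) = g * (a * b) * g⁻¹ := by group
    rwa [this] at h
  | inv a _ iha =>
    intro g
    have h := inv_mem (iha g)
    have : (g * a * g⁻¹)⁻¹ = g * a⁻¹ * g⁻¹ := by group
    rwa [this] at h

lemma SGA_le (w : CommWord) : SGA A w ≤ A := by
  rw [SGA]
  rw [Subgroup.closure_le]
  rintro x ⟨f, ⟨n₀, hn₀, hA⟩, rfl⟩
  have h1 : (QuotientGroup.mk' A) (CommWord.eval f w) = 1 := by
    rw [← CommWord.eval_map]
    exact CommWord.eval_eq_one_of_slot w n₀ hn₀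
      (by rw [QuotientGroup.mk'_apply, QuotientGroup.eq_one_iff]; exact hA)
  rw [QuotientGroup.mk'_apply, QuotientGroup.eq_one_iff] at h1
  exact h1

lemma peel : ∀ (w : CommWord), w.Multilinear → ∀ f g : ℕ → G,
    (∀ n ∈ w.vars, g n * (f n)⁻¹ ∈ A) →
    (CommWord.eval f w)⁻¹ * CommWord.eval g w ∈ SGA A w
  | .var n, _, f, g, h => by
    apply Subgroup.subset_closure
    refine ⟨fun _ => (f n)⁻¹ * g n, ⟨n, Finset.mem_singleton_self n, ?_⟩, rfl⟩
    have h1 := hAn.conj_mem _ (h n (Finset.mem_singleton_self n)) (f n)⁻¹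
    have h2 : (f n)⁻¹ * (g n * (f n)⁻¹) * (f n)⁻¹⁻¹ = (f n)⁻¹ * g n := by group
    rwa [h2] at h1
  | .comm u v, hw, f, g, h => by
    obtain ⟨hu, hv, hd⟩ := hw
    classical
    haveI hN : (SGA A (CommWord.comm u v)).Normal := SGA_normal A _
    set N := SGA A (CommWord.comm u v) with hNdef
    set π := QuotientGroup.mk' N with hπ
    have keyU : ∀ x ∈ slotSet A u, ∀ y ∈ wValues v G, Commute (π x) (π y) := by
      rintro x ⟨fx, ⟨n₀, hn₀, hAx⟩, rfl⟩ y ⟨fy, rfl⟩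
      rw [← commutatorElement_eq_one_iff_commute, ← map_commutatorElement,
        QuotientGroup.mk'_apply, QuotientGroup.eq_one_iff]
      apply Subgroup.subset_closure
      refine ⟨fun n => if n ∈ u.vars then fx n else fy n,
        ⟨n₀, Finset.mem_union_left _ hn₀, by simpa [hn₀] using hAx⟩, ?_⟩
      show ⁅CommWord.eval _ u, CommWord.eval _ v⁆ = _
      rw [CommWord.eval_congr u (fun n hn => if_pos hn),
        CommWord.eval_congr v (fun n hn =>
          if_neg (fun hc => Finset.disjoint_left.mp hd hc hn))]
    have keyV : ∀ x ∈ slotSet A v, ∀ y ∈ wValues u G, Commute (π x) (π y) := by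
      rintro x ⟨fx, ⟨n₀, hn₀, hAx⟩, rfl⟩ y ⟨fy, rfl⟩
      refine Commute.symm ?_
      rw [← commutatorElement_eq_one_iff_commute, ← map_commutatorElement,
        QuotientGroup.mk'_apply, QuotientGroup.eq_one_iff]
      apply Subgroup.subset_closure
      refine ⟨fun n => if n ∈ u.vars then fy n else fx n,
        ⟨n₀, Finset.mem_union_right _ hn₀, ?_⟩, ?_⟩
      · have : n₀ ∉ u.vars := fun hc => Finset.disjoint_left.mp hd hc hn₀
        simpa [this] using hAx
      · show ⁅CommWord.eval _ u, CommWord.eval _ v⁆ = _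
        rw [CommWord.eval_congr u (fun n hn => if_pos hn),
          CommWord.eval_congr v (fun n hn =>
            if_neg (fun hc => Finset.disjoint_left.mp hd hc hn))]
    have hp : (CommWord.eval f u)⁻¹ * CommWord.eval g u ∈ SGA A u :=
      peel u hu f g (fun n hn => h n (Finset.mem_union_left _ hn))
    have hq : (CommWord.eval f v)⁻¹ * CommWord.eval g v ∈ SGA A v :=
      peel v hv f g (fun n hn => h n (Finset.mem_union_right _ hn))
    set P₀ := CommWord.eval f u with hP₀
    set P := CommWord.eval g u with hP
    set Q₀ := CommWord.eval f v with hQ₀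
    set Q := CommWord.eval g v with hQ
    have himg : ∀ (S : Set G) (x : G), x ∈ closure S → π x ∈ closure (π '' S) := by
      intro S x hx
      rw [← MonoidHom.map_closure]
      exact ⟨x, hx, rfl⟩
    have hqv : Q₀⁻¹ * Q ∈ closure (wValues v G) := by
      refine Subgroup.closure_mono (slotSet_subset_wValues A v) ?_
      exact hq
    have c1 : Commute (π (P₀⁻¹ * P)) (π (Q₀⁻¹ * Q)) := by
      refine commute_of_mem_closures ?_ _ (himg _ _ hp) _ (himg _ _ hqv)
      rintro x ⟨x₀, hx₀, rfl⟩ y ⟨y₀, hy₀, rfl⟩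
      exact keyU x₀ hx₀ y₀ hy₀
    have c2 : Commute (π (P₀⁻¹ * P)) (π Q₀) := by
      refine commute_of_mem_closures ?_ _ (himg _ _ hp) _
        (himg (wValues v G) Q₀ (Subgroup.subset_closure (⟨f, hQ₀.symm⟩ : Q₀ ∈ wValues v G)))
      rintro x ⟨x₀, hx₀, rfl⟩ y ⟨y₀, hy₀, rfl⟩
      exact keyU x₀ hx₀ y₀ hy₀
    have c3 : Commute (π (Q₀⁻¹ * Q)) (π P₀) := by
      refine commute_of_mem_closures ?_ _ (himg _ _ hq) _
        (himg (wValues u G) P₀ (Subgroup.subset_closure (⟨f, hP₀.symm⟩ : P₀ ∈ wValues u G)))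
      rintro x ⟨x₀, hx₀, rfl⟩ y ⟨y₀, hy₀, rfl⟩
      exact keyV x₀ hx₀ y₀ hy₀
    have hmain : π (CommWord.eval g (CommWord.comm u v))
        = π (CommWord.eval f (CommWord.comm u v)) := by
      show π ⁅P, Q⁆ = π ⁅P₀, Q₀⁆
      have hPp : P = P₀ * (P₀⁻¹ * P) := by group
      have hQq : Q = Q₀ * (Q₀⁻¹ * Q) := by group
      rw [map_commutatorElement, map_commutatorElement]
      nth_rewrite 1 [hPp, hQq]
      rw [map_mul, map_mul]
      exact commAux c2 c1 c3
    have : (CommWord.eval f (CommWord.comm u v) : G)⁻¹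
        * CommWord.eval g (CommWord.comm u v) ∈ N := by
      rw [← QuotientGroup.eq]
      rw [hπ, QuotientGroup.mk'_apply, QuotientGroup.mk'_apply] at hmain
      exact hmain.symm
    exact this

lemma wval_A_commute {w : CommWord} (hw : w.Multilinear) (s : G) (hs : s ∈ wValues w G)
    (a : G) (ha : a ∈ A) :
    Commute ((QuotientGroup.mk' (SGA A w)) s) ((QuotientGroup.mk' (SGA A w)) a) := by
  obtain ⟨f, rfl⟩ := hs
  have hpe := peel A w hw f (fun n => a * f n * a⁻¹) ?_
  · rw [CommWord.eval_conj] at hpe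
    set s := CommWord.eval f w with hsdef
    set π := QuotientGroup.mk' (SGA A w) with hπ
    have : (π s : G ⧸ SGA A w) = π (a * s * a⁻¹) := by
      rw [hπ, QuotientGroup.mk'_apply, QuotientGroup.mk'_apply, QuotientGroup.eq]
      exact hpe
    rw [map_mul, map_mul] at this
    have h2 : π s * π a = π a * π s := by
      have := congrArg (fun z => z * π a) this
      simpa [mul_assoc] using this
    exact h2
  · intro n _
    have h1 : a * f n * a⁻¹ * (f n)⁻¹ = a * (f n * a⁻¹ * (f n)⁻¹) := by group
    rw [h1]
    exact mul_mem ha (hAn.conj_mem _ (inv_mem ha) (f n))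

end SlotSubgroup
section Main

open Subgroup
open scoped IsMulCommutative

universe u₀

lemma main_var : ∀ (D : ℕ) (G : Type u₀) [Group G], derivedSeries G D = ⊥ →
    (∀ x : G, IsOfFinOrder x) → ∀ K : Subgroup G, K.FG → Finite ↥K := by
  intro D
  induction D with
  | zero =>
    intro G _ hD _ K _
    haveI : Subsingleton G := by
      constructor
      intro a b
      have ha : a ∈ (⊥ : Subgroup G) := by
        rw [← hD, derivedSeries_zero]; exact Subgroup.mem_top a
      have hb : b ∈ (⊥ : Subgroup G) := by
        rw [← hD, derivedSeries_zero]; exact Subgroup.mem_top b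
      rw [Subgroup.mem_bot] at ha hb
      rw [ha, hb]
    haveI : Finite G := Finite.of_subsingleton
    exact Subtype.finite
  | succ D ih =>
    intro G _ hD htor K hK
    classical
    set A := derivedSeries G D with hA
    haveI : A.Normal := derivedSeries_normal G D
    have hAcomm : ∀ a ∈ A, ∀ b ∈ A, Commute a b := by
      intro a ha b hb
      rw [← commutatorElement_eq_one_iff_commute, ← Subgroup.mem_bot, ← hD, derivedSeries_succ]
      exact Subgroup.commutator_mem_commutator ha hb
    set σ := QuotientGroup.mk' A with hσ
    have hDR : derivedSeries (G ⧸ A) D = ⊥ := by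
      rw [← map_derivedSeries_eq (QuotientGroup.mk'_surjective A) D, ← hA]
      apply (Subgroup.map_eq_bot_iff _).mpr
      rw [QuotientGroup.ker_mk']
    have htorR : ∀ x : G ⧸ A, IsOfFinOrder x := by
      intro x
      obtain ⟨y, rfl⟩ := QuotientGroup.mk'_surjective A x
      exact σ.isOfFinOrder (htor y)
    have hKfg' := hK
    obtain ⟨T, hT⟩ := hK
    have himK : Finite ↥(K.map σ) := by
      refine ih (G ⧸ A) hDR htorR (K.map σ)
        ⟨T.image σ, by rw [Finset.coe_image, ← MonoidHom.map_closure, hT]⟩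
    refine finite_of_map_of_ker σ K hKfg' himK ?_
    intro L hL1 hL2 hLfg
    rw [hσ, QuotientGroup.ker_mk'] at hL1
    haveI : IsMulCommutative ↥A := ⟨⟨fun a b => Subtype.ext (hAcomm _ a.2 _ b.2)⟩⟩
    haveI : Group.FG ↥L := (Group.fg_iff_subgroup_fg L).mpr hLfg
    have e := Subgroup.subgroupOfEquivOfLe hL1
    haveI : Group.FG ↥(L.subgroupOf A) :=
      Group.fg_of_surjective (f := e.symm.toMonoidHom) e.symm.surjective
    have htorL : ∀ x : ↥(L.subgroupOf A), IsOfFinOrder x := by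
      intro x
      apply isOfFinOrder_subtype
      apply isOfFinOrder_subtype
      exact htor _
    have : Finite ↥(L.subgroupOf A) := finite_of_fg_torsion_comm htorL
    exact Finite.of_equiv _ e.toEquiv

lemma main_comm (u v : CommWord) (hw : (CommWord.comm u v).Multilinear) :
    ∀ (D : ℕ) (G : Type u₀) [Group G], derivedSeries G D = ⊥ →
    (∀ x ∈ wValues (CommWord.comm u v) G, IsOfFinOrder x) →
    ∀ T : Finset G, ((T : Set G) ⊆ wValues (CommWord.comm u v) G) →
    Finite ↥(Subgroup.closure (T : Set G)) := by
  intro D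
  induction D with
  | zero =>
    intro G _ hD _ T _
    haveI : Subsingleton G := by
      constructor
      intro a b
      have ha : a ∈ (⊥ : Subgroup G) := by
        rw [← hD, derivedSeries_zero]; exact Subgroup.mem_top a
      have hb : b ∈ (⊥ : Subgroup G) := by
        rw [← hD, derivedSeries_zero]; exact Subgroup.mem_top b
      rw [Subgroup.mem_bot] at ha hb
      rw [ha, hb]
    haveI : Finite G := Finite.of_subsingleton
    exact Subtype.finite
  | succ D ih =>
    intro G _ hD htor T hTsub
    classical
    set w := CommWord.comm u v with hwdef
    set A := derivedSeries G D with hA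
    haveI : A.Normal := derivedSeries_normal G D
    have hAcomm : ∀ a ∈ A, ∀ b ∈ A, Commute a b := by
      intro a ha b hb
      rw [← commutatorElement_eq_one_iff_commute, ← Subgroup.mem_bot, ← hD, derivedSeries_succ]
      exact Subgroup.commutator_mem_commutator ha hb
    set N := SGA A w with hNdef
    haveI : N.Normal := SGA_normal A w
    set π := QuotientGroup.mk' N with hπ
    set σ := QuotientGroup.mk' A with hσ
    have hDR : derivedSeries (G ⧸ A) D = ⊥ := by
      rw [← map_derivedSeries_eq (QuotientGroup.mk'_surjective A) D, ← hA]
      apply (Subgroup.map_eq_bot_iff _).mpr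
      rw [QuotientGroup.ker_mk']
    have htorR : ∀ x ∈ wValues w (G ⧸ A), IsOfFinOrder x := by
      intro x hx
      obtain ⟨y, hy, rfl⟩ :=
        wValues_subset_map_of_surjective σ (QuotientGroup.mk'_surjective A) w hx
      exact σ.isOfFinOrder (htor y hy)
    have hTR : ((T.image σ : Finset (G ⧸ A)) : Set (G ⧸ A)) ⊆ wValues w (G ⧸ A) := by
      rw [Finset.coe_image]
      rintro x ⟨t, ht, rfl⟩
      exact wValues_map_image σ w ⟨t, hTsub ht, rfl⟩
    have hfinR : Finite ↥(Subgroup.closure ((T.image σ : Finset (G ⧸ A)) : Set (G ⧸ A))) :=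
      ih (G ⧸ A) hDR htorR (T.image σ) hTR
    have hNA : N ≤ A := SGA_le A w
    set τ := QuotientGroup.map N A (MonoidHom.id G)
      (by rw [Subgroup.comap_id]; exact hNA) with hτ
    have hτπ : ∀ x : G, τ (π x) = σ x := by
      intro x
      rw [hτ, hπ, hσ]
      simpa using QuotientGroup.map_mk' N A (MonoidHom.id G) _ x
    set H := Subgroup.closure (T : Set G) with hH
    set Hb := Subgroup.closure ((π '' (T : Set G)) : Set (G ⧸ N)) with hHb
    have hHbmap : H.map π = Hb := by rw [hH, hHb, MonoidHom.map_closure]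
    have hHbτ : Hb.map τ
        = Subgroup.closure ((T.image σ : Finset (G ⧸ A)) : Set (G ⧸ A)) := by
      rw [← hHbmap, Subgroup.map_map]
      have hcomp : τ.comp π = σ := MonoidHom.ext hτπ
      rw [hcomp, hH, MonoidHom.map_closure, Finset.coe_image]
    have hfinHbτ : Finite ↥(Hb.map τ) := by rw [hHbτ]; exact hfinR
    have hzcomm : ∀ z ∈ A.map π, ∀ h' ∈ Subgroup.closure (π '' wValues w G),
        Commute z h' := by
      rintro z hz h' hh'
      obtain ⟨a, ha, rfl⟩ := hz
      refine commute_of_mem_closures (X := π '' (A : Set G)) (Y := π '' wValues w G)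
        ?_ _ ?_ _ hh'
      · rintro x ⟨a₀, ha₀, rfl⟩ y ⟨s₀, hs₀, rfl⟩
        exact (wval_A_commute A hw s₀ hs₀ a₀ ha₀).symm
      · exact Subgroup.subset_closure ⟨a, ha, rfl⟩
    haveI : Finite ↥(π '' (T : Set G)) := ((T : Set G).toFinite.image _).to_subtype
    haveI hFGHb : Group.FG ↥Hb := by rw [hHb]; exact Group.closure_finite_fg _
    set ψ := τ.comp Hb.subtype with hψ
    have hψrange : ψ.range = Hb.map τ := by
      rw [hψ, MonoidHom.range_comp, Subgroup.range_subtype]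
    haveI : Finite ↥ψ.range := by rw [hψrange]; exact hfinHbτ
    haveI : Finite (↥Hb ⧸ ψ.ker) :=
      Finite.of_equiv _ (QuotientGroup.quotientKerEquivRange ψ).symm.toEquiv
    haveI hkerFI : ψ.ker.FiniteIndex := Subgroup.finiteIndex_of_finite_quotient
    have hkerc : ψ.ker ≤ Subgroup.center ↥Hb := by
      intro z hz
      rw [Subgroup.mem_center_iff]
      intro g
      have hz1 : τ (z : G ⧸ N) = 1 := by
        simpa [hψ, MonoidHom.mem_ker] using hz
      obtain ⟨x, hx⟩ := QuotientGroup.mk'_surjective N (z : G ⧸ N)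
      have hxA : x ∈ A := by
        rw [← hx, hτπ x, hσ, QuotientGroup.mk'_apply, QuotientGroup.eq_one_iff] at hz1
        exact hz1
      have hzA : (z : G ⧸ N) ∈ A.map π := ⟨x, hxA, hx⟩
      have hgH : (g : G ⧸ N) ∈ Subgroup.closure (π '' wValues w G) := by
        have hle : Hb ≤ Subgroup.closure (π '' wValues w G) := by
          rw [hHb]
          exact Subgroup.closure_mono (Set.image_mono hTsub)
        exact hle g.2
      exact Subtype.ext ((hzcomm _ hzA _ hgH).symm.eq)
    haveI : (Subgroup.center ↥Hb).FiniteIndex := by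
      refine ⟨fun h0 => ?_⟩
      have hdvd := Subgroup.index_dvd_of_le hkerc
      rw [h0] at hdvd
      exact hkerFI.index_ne_zero (zero_dvd_iff.mp hdvd)
    have hXgen : Subgroup.closure
        (Subtype.val ⁻¹' (π '' (T : Set G)) : Set ↥Hb) = ⊤ :=
      Subgroup.closure_closure_coe_preimage
    have hXtor : ∀ x ∈ (Subtype.val ⁻¹' (π '' (T : Set G)) : Set ↥Hb),
        IsOfFinOrder x := by
      rintro x hx
      obtain ⟨t, ht, hteq⟩ := hx
      apply isOfFinOrder_subtype
      have h1 : IsOfFinOrder (π t) := π.isOfFinOrder (htor t (hTsub ht))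
      rwa [hteq] at h1
    have hHbfin : Finite ↥Hb := finite_of_center_findex _ hXgen hXtor
    have himH : Finite ↥(H.map π) := by rw [hHbmap]; exact hHbfin
    refine finite_of_map_of_ker π H ⟨T, hH.symm⟩ himH ?_
    intro L hL1 hL2 hLfg
    rw [hπ, QuotientGroup.ker_mk'] at hL1
    have hLA : L ≤ A := le_trans hL1 hNA
    have hNtor : ∀ x ∈ N, IsOfFinOrder x := by
      intro x hx
      refine isOfFinOrder_of_mem_closure_comm ?_ ?_ x hx
      · exact fun y hy => htor y (slotSet_subset_wValues A w hy)
      · intro p q hp hq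
        exact hAcomm p (SGA_le A w hp) q (SGA_le A w hq)
    haveI : IsMulCommutative ↥A := ⟨⟨fun a b => Subtype.ext (hAcomm _ a.2 _ b.2)⟩⟩
    haveI : Group.FG ↥L := (Group.fg_iff_subgroup_fg L).mpr hLfg
    have e := Subgroup.subgroupOfEquivOfLe hLA
    haveI : Group.FG ↥(L.subgroupOf A) :=
      Group.fg_of_surjective (f := e.symm.toMonoidHom) e.symm.surjective
    have htorL : ∀ x : ↥(L.subgroupOf A), IsOfFinOrder x := by
      intro x
      apply isOfFinOrder_subtype
      apply isOfFinOrder_subtype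
      exact hNtor _ (hL1 (Subgroup.mem_subgroupOf.mp x.2))
    have : Finite ↥(L.subgroupOf A) := finite_of_fg_torsion_comm htorL
    exact Finite.of_equiv _ e.toEquiv

end Main
section Glue

open Subgroup

theorem verbal_locallyFinite_of_solvable' (G : Type*) [Group G]
    (w : CommWord) (hw : w.Multilinear) (hsol : IsSolvable G)
    (hord : ∀ x ∈ wValues w G, IsOfFinOrder x) :
    ∀ H : Subgroup ↥(verbal w G), H.FG → Finite ↥H := by
  classical
  intro H hFG
  obtain ⟨D, hD⟩ := hsol.solvable
  set K := H.map (verbal w G).subtype with hK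
  have hKfg : K.FG := by
    obtain ⟨T₀, hT₀⟩ := hFG
    exact ⟨T₀.image (verbal w G).subtype,
      by rw [Finset.coe_image, ← MonoidHom.map_closure, hT₀]⟩
  have hfinK : Finite ↥K := by
    cases w with
    | var n =>
      have htor : ∀ x : G, IsOfFinOrder x := fun x => hord x ⟨fun _ => x, rfl⟩
      exact main_var D G hD htor K hKfg
    | comm u v =>
      -- decompose generators of K into finitely many w-values
      obtain ⟨Tk, hTk⟩ := hKfg
      have hdec : ∀ t ∈ Tk, ∃ l : List G,
          (∀ y ∈ l, y ∈ wValues (CommWord.comm u v) G) ∧ l.prod = t := by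
        intro t ht
        have htv : t ∈ verbal (CommWord.comm u v) G := by
          have : t ∈ K := hTk ▸ Subgroup.subset_closure ht
          rw [hK] at this
          exact Subgroup.map_subtype_le H this
        have htm : t ∈ Submonoid.closure
            (wValues (CommWord.comm u v) G ∪ (wValues (CommWord.comm u v) G)⁻¹) := by
          rw [← Subgroup.closure_toSubmonoid]
          exact htv
        obtain ⟨l, hl, hlp⟩ := Submonoid.exists_list_of_mem_closure htm
        refine ⟨l, fun y hy => ?_, hlp⟩
        rcases hl y hy with h | h
        · exact h
        · have := wValues_inv_mem hw (Set.mem_inv.mp h)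
          simpa using this
      set S : Finset G := Tk.attach.biUnion
        (fun t => ((hdec t t.2).choose).toFinset) with hS
      have hSsub : (S : Set G) ⊆ wValues (CommWord.comm u v) G := by
        intro y hy
        simp only [hS, Finset.coe_biUnion, Set.mem_iUnion, Finset.mem_coe,
          Finset.mem_biUnion, Finset.mem_attach, true_and] at hy
        obtain ⟨t, hyt⟩ := hy
        exact (hdec t t.2).choose_spec.1 y (List.mem_toFinset.mp hyt.2)
      have hKS : K ≤ Subgroup.closure (S : Set G) := by
        rw [← hTk, Subgroup.closure_le]
        intro t ht
        have hspec := (hdec t ht).choose_spec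
        rw [← hspec.2]
        apply list_prod_mem
        intro y hy
        apply Subgroup.subset_closure
        simp only [hS, Finset.coe_biUnion, Set.mem_iUnion, Finset.mem_coe,
          Finset.mem_biUnion, Finset.mem_attach, true_and]
        exact ⟨⟨t, ht⟩, trivial, List.mem_toFinset.mpr hy⟩
      have hfinS : Finite ↥(Subgroup.closure (S : Set G)) :=
        main_comm u v hw D G hD hord S hSsub
      exact Finite.of_injective _ (Subgroup.inclusion_injective hKS)
  have e := Subgroup.equivMapOfInjective H (verbal w G).subtype
    (Subgroup.subtype_injective _)
  exact Finite.of_equiv _ (hK ▸ e).symm.toEquiv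

end Glue


theorem verbal_locallyFinite_of_solvable (G : Type*) [Group G]
    (w : CommWord) (hw : w.Multilinear) (hsol : IsSolvable G)
    (hord : ∀ x ∈ wValues w G, IsOfFinOrder x) :
    ∀ H : Subgroup ↥(verbal w G), H.FG → Finite ↥H :=
  verbal_locallyFinite_of_solvable' G w hw hsol hord
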